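/- The logic N4CK has the Constructible Falsity Property: for all formulas φ, ψ of the conditional language, ~(φ ∧ ψ) is valid in all Nelsonian conditional models if and only if at least one of ~φ, ~ψ is valid in all Nelsonian conditional models. -/
import Mathlib


inductive CForm : Type where
  | var : Nat → CForm
  | and : CForm → CForm → CForm
  | or  : CForm → CForm → CForm
  | neg : CForm → CForm
  | imp : CForm → CForm → CForm
  | cond : CForm → CForm → CForm

/-- A Nelsonian conditional model: a Nelsonian model together with a
bi-set-indexed accessibility relation satisfying (c1) and (c2). -/
structure CNModel where
  W : Type
  le : W → W → Prop
  refl : ∀ w, le w w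
  trans : ∀ {a b c}, le a b → le b c → le a c
  Vp : Nat → W → Prop
  Vn : Nat → W → Prop
  monoP : ∀ (n : Nat) {w v}, le w v → Vp n w → Vp n v
  monoN : ∀ (n : Nat) {w v}, le w v → Vn n w → Vn n v
  R : W → Set W × Set W → W → Prop
  c1 : ∀ (XY : Set W × Set W) {w w' v}, le w w' → R w XY v → ∃ v', R w' XY v' ∧ le v v'
  c2 : ∀ (XY : Set W × Set W) {w v v'}, R w XY v → le v v' → ∃ w', le w w' ∧ R w' XY v'

/-- Verification (`true`) and falsification (`false`) in a Nelsonian conditional model. -/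
def CNModel.sat (M : CNModel) : CForm → Bool → M.W → Prop
  | .var n, true, w => M.Vp n w
  | .var n, false, w => M.Vn n w
  | .and φ ψ, true, w => M.sat φ true w ∧ M.sat ψ true w
  | .and φ ψ, false, w => M.sat φ false w ∨ M.sat ψ false w
  | .or φ ψ, true, w => M.sat φ true w ∨ M.sat ψ true w
  | .or φ ψ, false, w => M.sat φ false w ∧ M.sat ψ false w
  | .neg φ, b, w => M.sat φ (!b) w
  | .imp φ ψ, true, w => ∀ v, M.le w v → M.sat φ true v → M.sat ψ true v
  | .imp φ ψ, false, w => M.sat φ true w ∧ M.sat ψ false w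
  | .cond φ ψ, true, w =>
      ∀ v u, M.le w v → M.R v ({x | M.sat φ true x}, {x | M.sat φ false x}) u →
        M.sat ψ true u
  | .cond φ ψ, false, w =>
      ∃ u, M.R w ({x | M.sat φ true x}, {x | M.sat φ false x}) u ∧ M.sat ψ false u

/-- N4CK-validity: verified at every world of every Nelsonian conditional model. -/
def CValid (φ : CForm) : Prop := ∀ (M : CNModel) (w : M.W), M.sat φ true w

/-- Heredity: satisfaction is monotone along `le`. -/
theorem CNModel.hered (M : CNModel) :
    ∀ (φ : CForm) (b : Bool) {w v : M.W}, M.le w v → M.sat φ b w → M.sat φ b v := by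
  intro φ
  induction φ with
  | var n =>
    intro b w v h hs
    cases b
    · exact M.monoN n h hs
    · exact M.monoP n h hs
  | and φ ψ ihφ ihψ =>
    intro b w v h hs
    cases b
    · exact hs.imp (ihφ false h) (ihψ false h)
    · exact ⟨ihφ true h hs.1, ihψ true h hs.2⟩
  | or φ ψ ihφ ihψ =>
    intro b w v h hs
    cases b
    · exact ⟨ihφ false h hs.1, ihψ false h hs.2⟩
    · exact hs.imp (ihφ true h) (ihψ true h)
  | neg φ ihφ =>
    intro b w v h hs
    exact ihφ (!b) h hs
  | imp φ ψ ihφ ihψ =>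
    intro b w v h hs
    cases b
    · exact ⟨ihφ true h hs.1, ihψ false h hs.2⟩
    · intro v' hv' hφ'
      exact hs v' (M.trans h hv') hφ'
  | cond φ ψ ihφ ihψ =>
    intro b w v h hs
    cases b
    · obtain ⟨u, hu, hψu⟩ := hs
      obtain ⟨u', hu', huu'⟩ := M.c1 _ h hu
      exact ⟨u', hu', ihψ false huu' hψu⟩
    · intro v' u hv' hu
      exact hs v' u (M.trans h hv') hu

namespace NJ

variable (M1 M2 : CNModel)

/-- Worlds of the joined model: a fresh root plus the disjoint union. -/
abbrev JW := Option (M1.W ⊕ M2.W)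

def jle : JW M1 M2 → JW M1 M2 → Prop
  | none, _ => True
  | some (.inl a), some (.inl b) => M1.le a b
  | some (.inr a), some (.inr b) => M2.le a b
  | _, _ => False

def jR : JW M1 M2 → Set (JW M1 M2) × Set (JW M1 M2) → JW M1 M2 → Prop
  | some (.inl a), XY, some (.inl b) =>
      M1.R a ({x | some (Sum.inl x) ∈ XY.1}, {x | some (Sum.inl x) ∈ XY.2}) b
  | some (.inr a), XY, some (.inr b) =>
      M2.R a ({x | some (Sum.inr x) ∈ XY.1}, {x | some (Sum.inr x) ∈ XY.2}) b
  | _, _, _ => False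

/-- The join of two models under a fresh root. -/
def join : CNModel where
  W := JW M1 M2
  le := jle M1 M2
  refl := by rintro (_ | (a | a)) <;> simp [jle] <;> [exact M1.refl a; exact M2.refl a]
  trans := by
    rintro (_ | (a | a)) (_ | (b | b)) (_ | (c | c)) h1 h2 <;> simp_all [jle]
    · exact M1.trans h1 h2
    · exact M2.trans h1 h2
  Vp := fun n w => match w with
    | some (.inl a) => M1.Vp n a
    | some (.inr a) => M2.Vp n a
    | none => False
  Vn := fun n w => match w with
    | some (.inl a) => M1.Vn n a
    | some (.inr a) => M2.Vn n a
    | none => False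
  monoP := by
    rintro n (_ | (a | a)) (_ | (b | b)) h hv <;> simp_all [jle]
    · exact M1.monoP n h hv
    · exact M2.monoP n h hv
  monoN := by
    rintro n (_ | (a | a)) (_ | (b | b)) h hv <;> simp_all [jle]
    · exact M1.monoN n h hv
    · exact M2.monoN n h hv
  R := jR M1 M2
  c1 := by
    rintro XY (_ | (a | a)) (_ | (a' | a')) (_ | (b | b)) h hR <;> simp_all [jle, jR]
    · obtain ⟨b', hb', hbb'⟩ := M1.c1 _ h hR
      exact ⟨some (Sum.inl b'), hb', hbb'⟩
    · obtain ⟨b', hb', hbb'⟩ := M2.c1 _ h hR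
      exact ⟨some (Sum.inr b'), hb', hbb'⟩
  c2 := by
    rintro XY (_ | (a | a)) (_ | (b | b)) (_ | (b' | b')) hR h <;> simp_all [jle, jR]
    · obtain ⟨a', haa', ha'⟩ := M1.c2 _ hR h
      exact ⟨some (Sum.inl a'), haa', ha'⟩
    · obtain ⟨a', haa', ha'⟩ := M2.c2 _ hR h
      exact ⟨some (Sum.inr a'), haa', ha'⟩

/-- Satisfaction in the join at a left world agrees with satisfaction in `M1`. -/
theorem sat_inl : ∀ (φ : CForm) (b : Bool) (w : M1.W),
    (join M1 M2).sat φ b (some (Sum.inl w)) ↔ M1.sat φ b w := by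
  intro φ
  induction φ with
  | var n => intro b w; cases b <;> exact Iff.rfl
  | and φ ψ ihφ ihψ =>
    intro b w; cases b <;> simp only [CNModel.sat, ihφ, ihψ]
  | or φ ψ ihφ ihψ =>
    intro b w; cases b <;> simp only [CNModel.sat, ihφ, ihψ]
  | neg φ ihφ =>
    intro b w; exact ihφ (!b) w
  | imp φ ψ ihφ ihψ =>
    intro b w
    cases b
    · simp only [CNModel.sat, ihφ, ihψ]
    · constructor
      · intro h v hv hφv
        exact (ihψ true v).1 (h (some (Sum.inl v)) hv ((ihφ true v).2 hφv))
      · rintro h (_ | (v | v)) hv hφv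
        · exact hv.elim
        · exact (ihψ true v).2 (h v hv ((ihφ true v).1 hφv))
        · exact hv.elim
  | cond φ ψ ihφ ihψ =>
    intro b w
    have hset : ∀ v u : M1.W,
        (join M1 M2).R (some (Sum.inl v))
          ({x | (join M1 M2).sat φ true x}, {x | (join M1 M2).sat φ false x})
          (some (Sum.inl u)) ↔
        M1.R v ({x | M1.sat φ true x}, {x | M1.sat φ false x}) u := by
      intro v u
      show M1.R v ({x | (join M1 M2).sat φ true (some (Sum.inl x))},
        {x | (join M1 M2).sat φ false (some (Sum.inl x))}) u ↔ _
      have e1 : {x | (join M1 M2).sat φ true (some (Sum.inl x))}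
          = {x | M1.sat φ true x} := Set.ext fun x => ihφ true x
      have e2 : {x | (join M1 M2).sat φ false (some (Sum.inl x))}
          = {x | M1.sat φ false x} := Set.ext fun x => ihφ false x
      rw [e1, e2]
    cases b
    · constructor
      · rintro ⟨(_ | (u | u)), hu, hψu⟩
        · exact hu.elim
        · exact ⟨u, (hset w u).1 hu, (ihψ false u).1 hψu⟩
        · exact hu.elim
      · rintro ⟨u, hu, hψu⟩
        exact ⟨some (Sum.inl u), (hset w u).2 hu, (ihψ false u).2 hψu⟩
    · constructor
      · intro h v u hv hu
        exact (ihψ true u).1 (h (some (Sum.inl v)) (some (Sum.inl u)) hv ((hset v u).2 hu))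
      · rintro h (_ | (v | v)) (_ | (u | u)) hv hu <;> try exact hv.elim
        · exact hu.elim
        · exact (ihψ true u).2 (h v u hv ((hset v u).1 hu))
        · exact hu.elim

/-- Satisfaction in the join at a right world agrees with satisfaction in `M2`. -/
theorem sat_inr : ∀ (φ : CForm) (b : Bool) (w : M2.W),
    (join M1 M2).sat φ b (some (Sum.inr w)) ↔ M2.sat φ b w := by
  intro φ
  induction φ with
  | var n => intro b w; cases b <;> exact Iff.rfl
  | and φ ψ ihφ ihψ =>
    intro b w; cases b <;> simp only [CNModel.sat, ihφ, ihψ]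
  | or φ ψ ihφ ihψ =>
    intro b w; cases b <;> simp only [CNModel.sat, ihφ, ihψ]
  | neg φ ihφ =>
    intro b w; exact ihφ (!b) w
  | imp φ ψ ihφ ihψ =>
    intro b w
    cases b
    · simp only [CNModel.sat, ihφ, ihψ]
    · constructor
      · intro h v hv hφv
        exact (ihψ true v).1 (h (some (Sum.inr v)) hv ((ihφ true v).2 hφv))
      · rintro h (_ | (v | v)) hv hφv
        · exact hv.elim
        · exact hv.elim
        · exact (ihψ true v).2 (h v hv ((ihφ true v).1 hφv))
  | cond φ ψ ihφ ihψ =>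
    intro b w
    have hset : ∀ v u : M2.W,
        (join M1 M2).R (some (Sum.inr v))
          ({x | (join M1 M2).sat φ true x}, {x | (join M1 M2).sat φ false x})
          (some (Sum.inr u)) ↔
        M2.R v ({x | M2.sat φ true x}, {x | M2.sat φ false x}) u := by
      intro v u
      show M2.R v ({x | (join M1 M2).sat φ true (some (Sum.inr x))},
        {x | (join M1 M2).sat φ false (some (Sum.inr x))}) u ↔ _
      have e1 : {x | (join M1 M2).sat φ true (some (Sum.inr x))}
          = {x | M2.sat φ true x} := Set.ext fun x => ihφ true x
      have e2 : {x | (join M1 M2).sat φ false (some (Sum.inr x))}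
          = {x | M2.sat φ false x} := Set.ext fun x => ihφ false x
      rw [e1, e2]
    cases b
    · constructor
      · rintro ⟨(_ | (u | u)), hu, hψu⟩
        · exact hu.elim
        · exact hu.elim
        · exact ⟨u, (hset w u).1 hu, (ihψ false u).1 hψu⟩
      · rintro ⟨u, hu, hψu⟩
        exact ⟨some (Sum.inr u), (hset w u).2 hu, (ihψ false u).2 hψu⟩
    · constructor
      · intro h v u hv hu
        exact (ihψ true u).1 (h (some (Sum.inr v)) (some (Sum.inr u)) hv ((hset v u).2 hu))
      · rintro h (_ | (v | v)) (_ | (u | u)) hv hu <;> try exact hv.elim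
        · exact hu.elim
        · exact hu.elim
        · exact (ihψ true u).2 (h v u hv ((hset v u).1 hu))

end NJ

/-- N4CK has the Constructible Falsity Property. -/
theorem n4ck_cfp (φ ψ : CForm) :
    CValid (.neg (.and φ ψ)) ↔ (CValid (.neg φ) ∨ CValid (.neg ψ)) := by
  constructor
  · intro h
    by_contra hc
    push_neg at hc
    obtain ⟨h1, h2⟩ := hc
    simp only [CValid, not_forall] at h1 h2
    obtain ⟨M1, w1, hw1⟩ := h1
    obtain ⟨M2, w2, hw2⟩ := h2
    have hroot := h (NJ.join M1 M2) none
    have hroot' : (NJ.join M1 M2).sat φ false none ∨ (NJ.join M1 M2).sat ψ false none := hroot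
    rcases hroot' with hf | hf
    · exact hw1 ((NJ.sat_inl M1 M2 φ false w1).1
        ((NJ.join M1 M2).hered φ false (w := none) trivial hf))
    · exact hw2 ((NJ.sat_inr M1 M2 ψ false w2).1
        ((NJ.join M1 M2).hered ψ false (w := none) trivial hf))
  · rintro (h | h) M w
    · exact Or.inl (h M w)
    · exact Or.inr (h M w)
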